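/- Let X be a finite metric space and λΔ a simplex with #λΔ = #X and all non-zero distances equal to λ > 0. Then 2 d_GH(λΔ, X) = max{λ − ε(X), diam X − λ}, where ε(X) = min{|xy| : x ≠ y in X}. -/
import Mathlib


open Metric

/-- The Gromov–Hausdorff distance between two (bounded) metric spaces: the
infimum of Hausdorff distances between the canonical copies of `X` and `Y`
inside their disjoint union, over all pseudometrics on the disjoint union
extending the metrics of `X` and of `Y`. -/
noncomputable def ghDist (X : Type*) (Y : Type*) [MetricSpace X] [MetricSpace Y] : ℝ :=
  sInf { r : ℝ | ∃ m : PseudoMetricSpace (X ⊕ Y),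
    (∀ x x' : X, @Dist.dist _ m.toDist (Sum.inl x) (Sum.inl x') = dist x x') ∧
    (∀ y y' : Y, @Dist.dist _ m.toDist (Sum.inr y) (Sum.inr y') = dist y y') ∧
    r = @Metric.hausdorffDist (X ⊕ Y) m
        (Set.range Sum.inl) (Set.range Sum.inr) }

section Aux

open Sum

variable {S X : Type*} [MetricSpace S] [MetricSpace X] [Finite S] [Nonempty S]

/-- Cross distance from a point of `S` to a point of `X`, used to glue the two
metric spaces along the bijection `f` at "width" `ρ`. -/
noncomputable def crossDist (f : S ≃ X) (ρ : ℝ) (s : S) (x : X) : ℝ :=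
  ⨅ s' : S, (dist s s' + ρ + dist (f s') x)

lemma crossDist_le (f : S ≃ X) (ρ : ℝ) (s : S) (x : X) (s' : S) :
    crossDist f ρ s x ≤ dist s s' + ρ + dist (f s') x :=
  ciInf_le (Set.finite_range _).bddBelow s'

lemma exists_crossDist_eq (f : S ≃ X) (ρ : ℝ) (s : S) (x : X) :
    ∃ s', crossDist f ρ s x = dist s s' + ρ + dist (f s') x := by
  obtain ⟨s', hs'⟩ := Finite.exists_min (fun s' : S => dist s s' + ρ + dist (f s') x)
  exact ⟨s', le_antisymm (crossDist_le f ρ s x s') (le_ciInf hs')⟩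

/-- A distance on the disjoint union `S ⊕ X`. -/
noncomputable def sumDist (f : S ≃ X) (ρ : ℝ) : S ⊕ X → S ⊕ X → ℝ
  | inl s, inl s' => dist s s'
  | inr x, inr x' => dist x x'
  | inl s, inr x => crossDist f ρ s x
  | inr x, inl s => crossDist f ρ s x

lemma crossDist_tri_left (f : S ≃ X) (ρ : ℝ) (s t : S) (x : X) :
    crossDist f ρ s x ≤ dist s t + crossDist f ρ t x := by
  obtain ⟨t', ht'⟩ := exists_crossDist_eq f ρ t x
  calc crossDist f ρ s x ≤ dist s t' + ρ + dist (f t') x := crossDist_le f ρ s x t'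
    _ ≤ (dist s t + dist t t') + ρ + dist (f t') x := by
        gcongr; exact dist_triangle s t t'
    _ = dist s t + crossDist f ρ t x := by rw [ht']; ring

lemma crossDist_tri_right (f : S ≃ X) (ρ : ℝ) (s : S) (x y : X) :
    crossDist f ρ s y ≤ crossDist f ρ s x + dist x y := by
  obtain ⟨s', hs'⟩ := exists_crossDist_eq f ρ s x
  calc crossDist f ρ s y ≤ dist s s' + ρ + dist (f s') y := crossDist_le f ρ s y s'
    _ ≤ dist s s' + ρ + (dist (f s') x + dist x y) := by
        gcongr; exact dist_triangle _ _ _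
    _ = crossDist f ρ s x + dist x y := by rw [hs']; ring

lemma crossDist_tri_SS (f : S ≃ X) (ρ : ℝ)
    (key1 : ∀ s t : S, dist s t ≤ 2 * ρ + dist (f s) (f t))
    (s t : S) (x : X) :
    dist s t ≤ crossDist f ρ s x + crossDist f ρ t x := by
  obtain ⟨s', hs'⟩ := exists_crossDist_eq f ρ s x
  obtain ⟨t', ht'⟩ := exists_crossDist_eq f ρ t x
  have h1 : dist s t ≤ dist s s' + dist s' t' + dist t' t := dist_triangle4 s s' t' t
  have h2 : dist s' t' ≤ 2 * ρ + dist (f s') (f t') := key1 s' t'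
  have h3 : dist (f s') (f t') ≤ dist (f s') x + dist x (f t') := dist_triangle _ _ _
  have h4 : dist x (f t') = dist (f t') x := dist_comm _ _
  have h5 : dist t' t = dist t t' := dist_comm _ _
  rw [hs', ht']
  linarith

lemma crossDist_tri_XX (f : S ≃ X) (ρ : ℝ)
    (key2 : ∀ s t : S, dist (f s) (f t) ≤ 2 * ρ + dist s t)
    (s : S) (x y : X) :
    dist x y ≤ crossDist f ρ s x + crossDist f ρ s y := by
  obtain ⟨s', hs'⟩ := exists_crossDist_eq f ρ s x
  obtain ⟨t', ht'⟩ := exists_crossDist_eq f ρ s y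
  have h1 : dist x y ≤ dist x (f s') + dist (f s') (f t') + dist (f t') y :=
    dist_triangle4 x (f s') (f t') y
  have h2 : dist (f s') (f t') ≤ 2 * ρ + dist s' t' := key2 s' t'
  have h3 : dist s' t' ≤ dist s' s + dist s t' := dist_triangle _ _ _
  have h4 : dist s' s = dist s s' := dist_comm _ _
  have h5 : dist x (f s') = dist (f s') x := dist_comm _ _
  rw [hs', ht']
  linarith

lemma sumDist_triangle (f : S ≃ X) (ρ : ℝ)
    (key1 : ∀ s t : S, dist s t ≤ 2 * ρ + dist (f s) (f t))
    (key2 : ∀ s t : S, dist (f s) (f t) ≤ 2 * ρ + dist s t) :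
    ∀ a b c : S ⊕ X, sumDist f ρ a c ≤ sumDist f ρ a b + sumDist f ρ b c := by
  rintro (s | x) (t | y) (u | z) <;> simp only [sumDist]
  · exact dist_triangle s t u
  · exact crossDist_tri_left f ρ s t z
  · exact crossDist_tri_SS f ρ key1 s u y
  · exact crossDist_tri_right f ρ s y z
  · calc crossDist f ρ u x ≤ dist u t + crossDist f ρ t x := crossDist_tri_left f ρ u t x
      _ = crossDist f ρ t x + dist t u := by rw [dist_comm u t]; ring
  · exact crossDist_tri_XX f ρ key2 t x z
  · calc crossDist f ρ u x ≤ crossDist f ρ u y + dist y x := crossDist_tri_right f ρ u y x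
      _ = dist x y + crossDist f ρ u y := by rw [dist_comm y x]; ring
  · exact dist_triangle x y z

end Aux

/-- If `X` is a finite metric space (with at least two points) and `S` is a
simplex of the same cardinality with all non-zero distances equal to `λ > 0`,
then `2 d_GH(S, X) = max {λ − ε(X), diam X − λ}`, where `ε(X)` is the smallest
non-zero distance in `X`. -/
theorem two_ghDist_simplex_of_card_eq {X : Type*} [MetricSpace X] [Finite X]
    (htwo : ∃ x y : X, x ≠ y)
    (S : Type*) [MetricSpace S]
    (l : ℝ) (hl : 0 < l)
    (hsim : ∀ s s' : S, s ≠ s' → dist s s' = l)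
    (hcard : Nat.card S = Nat.card X) :
    2 * ghDist S X =
      max (l - sInf {d : ℝ | ∃ x y : X, x ≠ y ∧ dist x y = d})
          (diam (Set.univ : Set X) - l) := by
  obtain ⟨x₀, y₀, hxy₀⟩ := htwo
  have hXne : Nonempty X := ⟨x₀⟩
  have hScard : 0 < Nat.card S := by rw [hcard]; exact Nat.card_pos
  obtain ⟨hSne, hSfin⟩ := Nat.card_pos_iff.mp hScard
  -- a bijection between S and X
  letI : Fintype S := Fintype.ofFinite S
  letI : Fintype X := Fintype.ofFinite X
  have hcard' : Fintype.card S = Fintype.card X := by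
    rw [← Nat.card_eq_fintype_card, ← Nat.card_eq_fintype_card]; exact hcard
  let f : S ≃ X := Fintype.equivOfCardEq hcard'
  -- notation
  set E : Set ℝ := {d : ℝ | ∃ x y : X, x ≠ y ∧ dist x y = d} with hE
  set ε : ℝ := sInf E with hεdef
  set D : ℝ := diam (Set.univ : Set X) with hDdef
  set M : ℝ := max (l - ε) (D - l) with hMdef
  set ρ : ℝ := M / 2 with hρdef
  -- basic facts about ε and D
  have hEfin : E.Finite := by
    apply Set.Finite.subset (Set.finite_range (fun p : X × X => dist p.1 p.2))
    rintro d ⟨x, y, _, rfl⟩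
    exact ⟨(x, y), rfl⟩
  have hEne : E.Nonempty := ⟨dist x₀ y₀, x₀, y₀, hxy₀, rfl⟩
  have hεmem : ε ∈ E := hEne.csInf_mem hEfin
  obtain ⟨xε, yε, hxyε, hdε⟩ := hεmem
  have hεpos : 0 < ε := by rw [← hdε]; exact dist_pos.mpr hxyε
  have hεle : ∀ x y : X, x ≠ y → ε ≤ dist x y := fun x y h =>
    csInf_le hEfin.bddBelow ⟨x, y, h, rfl⟩
  have hDle : ∀ x y : X, dist x y ≤ D := fun x y =>
    dist_le_diam_of_mem Set.finite_univ.isBounded trivial trivial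
  have hεD : ε ≤ D := by rw [← hdε]; exact hDle xε yε
  have hM0 : 0 ≤ M := by
    rcases le_or_gt l ε with h | h
    · exact le_max_of_le_right (by linarith)
    · exact le_max_of_le_left (by linarith)
  have hρ0 : 0 ≤ ρ := by rw [hρdef]; linarith
  have h2ρ : 2 * ρ = M := by rw [hρdef]; ring
  have hMl : l - ε ≤ M := le_max_left _ _
  have hMD : D - l ≤ M := le_max_right _ _
  -- key inequalities for the glued metric
  have key1 : ∀ s t : S, dist s t ≤ 2 * ρ + dist (f s) (f t) := by
    intro s t
    rcases eq_or_ne s t with rfl | h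
    · simp only [dist_self]
      have := dist_nonneg (x := f s) (y := f s)
      linarith
    · rw [hsim s t h]
      have hft : f s ≠ f t := fun hh => h (f.injective hh)
      have := hεle _ _ hft
      linarith
  have key2 : ∀ s t : S, dist (f s) (f t) ≤ 2 * ρ + dist s t := by
    intro s t
    rcases eq_or_ne s t with rfl | h
    · simp only [dist_self]
      have := dist_nonneg (x := s) (y := s)
      linarith
    · rw [hsim s t h]
      have := hDle (f s) (f t)
      linarith
  -- the set defining ghDist
  set G : Set ℝ := { r : ℝ | ∃ m : PseudoMetricSpace (S ⊕ X),
    (∀ x x' : S, @Dist.dist _ m.toDist (Sum.inl x) (Sum.inl x') = dist x x') ∧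
    (∀ y y' : X, @Dist.dist _ m.toDist (Sum.inr y) (Sum.inr y') = dist y y') ∧
    r = @Metric.hausdorffDist (S ⊕ X) m
        (Set.range Sum.inl) (Set.range Sum.inr) } with hG
  have hgh : ghDist S X = sInf G := rfl
  -- lower bound : every element of G is at least ρ
  have hlow : ∀ r ∈ G, ρ ≤ r := by
    rintro r ⟨m, h1, h2, rfl⟩
    letI := m
    have h1' : ∀ s s' : S, dist (Sum.inl s : S ⊕ X) (Sum.inl s') = dist s s' := h1
    have h2' : ∀ x x' : X, dist (Sum.inr x : S ⊕ X) (Sum.inr x') = dist x x' := h2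
    set r := hausdorffDist (Set.range (Sum.inl : S → S ⊕ X)) (Set.range Sum.inr) with hr
    have hfin : EMetric.hausdorffEdist (Set.range (Sum.inl : S → S ⊕ X)) (Set.range Sum.inr) ≠ ⊤ :=
      hausdorffEdist_ne_top_of_nonempty_of_bounded (Set.range_nonempty _) (Set.range_nonempty _)
        (Set.finite_range _).isBounded (Set.finite_range _).isBounded
    have hr0 : 0 ≤ r := hausdorffDist_nonneg
    have hsl : ∀ s s' : S, dist (Sum.inl s : S ⊕ X) (Sum.inl s') ≤ l := by
      intro s s'
      rw [h1']
      rcases eq_or_ne s s' with rfl | h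
      · simp [le_of_lt hl]
      · rw [hsim s s' h]
    -- claim A : D - l ≤ 2 r
    have claimA : D - l ≤ 2 * r := by
      have : ∀ η > (0 : ℝ), D ≤ (2 * r + l) + η := by
        intro η hη
        have hlt : r < r + η / 2 := by linarith
        have : D ≤ 2 * (r + η / 2) + l := by
          apply diam_le_of_forall_dist_le (by linarith)
          intro x _ y _
          obtain ⟨a, ⟨s, rfl⟩, ha⟩ :=
            exists_dist_lt_of_hausdorffDist_lt' (Set.mem_range_self x) hlt hfin
          obtain ⟨b, ⟨s', rfl⟩, hb⟩ :=
            exists_dist_lt_of_hausdorffDist_lt' (Set.mem_range_self y) hlt hfin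
          have t1 : dist x y = dist (Sum.inr x : S ⊕ X) (Sum.inr y) := (h2' x y).symm
          have t2 : dist (Sum.inr x : S ⊕ X) (Sum.inr y) ≤
              dist (Sum.inr x : S ⊕ X) (Sum.inl s) + dist (Sum.inl s : S ⊕ X) (Sum.inl s')
                + dist (Sum.inl s' : S ⊕ X) (Sum.inr y) := dist_triangle4 _ _ _ _
          have t3 : dist (Sum.inr x : S ⊕ X) (Sum.inl s) < r + η / 2 := by
            rw [dist_comm]; exact ha
          have t4 : dist (Sum.inl s' : S ⊕ X) (Sum.inr y) < r + η / 2 := hb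
          have t5 := hsl s s'
          rw [t1]
          linarith
        linarith
      have := le_of_forall_pos_le_add this
      linarith
    -- claim B : l - ε ≤ 2 r
    have claimB : l - ε ≤ 2 * r := by
      have : ∀ η > (0 : ℝ), l - ε ≤ (2 * r) + η := by
        intro η hη
        have hlt : r < r + η / 2 := by linarith
        by_cases hc : l ≤ 2 * (r + η / 2)
        · linarith
        · push_neg at hc
          have hgs : ∀ s : S, ∃ x : X, dist (Sum.inl s : S ⊕ X) (Sum.inr x) < r + η / 2 := by
            intro s
            obtain ⟨b, ⟨x, rfl⟩, hb⟩ :=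
              exists_dist_lt_of_hausdorffDist_lt (Set.mem_range_self s) hlt hfin
            exact ⟨x, hb⟩
          choose g hg using hgs
          have hginj : Function.Injective g := by
            intro s s' hss
            by_contra h
            have : (l : ℝ) = dist s s' := (hsim s s' h).symm
            have t2 : dist (Sum.inl s : S ⊕ X) (Sum.inl s') ≤
                dist (Sum.inl s : S ⊕ X) (Sum.inr (g s)) +
                  dist (Sum.inr (g s) : S ⊕ X) (Sum.inl s') := dist_triangle _ _ _
            have t3 : dist (Sum.inr (g s) : S ⊕ X) (Sum.inl s') < r + η / 2 := by
              rw [dist_comm, hss]; exact hg s'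
            have t4 := hg s
            rw [h1', ← this] at t2
            linarith
          have hgsurj : Function.Surjective g := by
            have hinj : Function.Injective (f.symm ∘ g) := f.symm.injective.comp hginj
            have hsurj := (Finite.injective_iff_surjective).mp hinj
            intro x
            obtain ⟨s, hs⟩ := hsurj (f.symm x)
            exact ⟨s, f.symm.injective hs⟩
          obtain ⟨s, rfl⟩ := hgsurj xε
          obtain ⟨s', rfl⟩ := hgsurj yε
          have hss' : s ≠ s' := fun h => hxyε (by rw [h])
          have t1 : (l : ℝ) = dist (Sum.inl s : S ⊕ X) (Sum.inl s') := by
            rw [h1', hsim s s' hss']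
          have t2 : dist (Sum.inl s : S ⊕ X) (Sum.inl s') ≤
              dist (Sum.inl s : S ⊕ X) (Sum.inr (g s)) +
                dist (Sum.inr (g s) : S ⊕ X) (Sum.inr (g s')) +
                dist (Sum.inr (g s') : S ⊕ X) (Sum.inl s') := dist_triangle4 _ _ _ _
          have t3 := hg s
          have t4 : dist (Sum.inr (g s') : S ⊕ X) (Sum.inl s') < r + η / 2 := by
            rw [dist_comm]; exact hg s'
          have t5 : dist (Sum.inr (g s) : S ⊕ X) (Sum.inr (g s')) = ε := by
            rw [h2', hdε]
          linarith
      have := le_of_forall_pos_le_add this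
      linarith
    -- conclude
    have : M ≤ 2 * r := max_le (by linarith) (by linarith)
    linarith
  -- upper bound : the glued metric gives an element ≤ ρ
  letI m : PseudoMetricSpace (S ⊕ X) :=
    { dist := sumDist f ρ
      dist_self := by rintro (s | x) <;> simp [sumDist]
      dist_comm := by rintro (s | x) (t | y) <;> simp [sumDist, dist_comm]
      dist_triangle := sumDist_triangle f ρ key1 key2 }
  have hmem : @Metric.hausdorffDist (S ⊕ X) m (Set.range Sum.inl) (Set.range Sum.inr) ∈ G :=
    ⟨m, fun s s' => rfl, fun x x' => rfl, rfl⟩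
  have hub : @Metric.hausdorffDist (S ⊕ X) m (Set.range Sum.inl) (Set.range Sum.inr) ≤ ρ := by
    apply hausdorffDist_le_of_mem_dist hρ0
    · rintro a ⟨s, rfl⟩
      refine ⟨Sum.inr (f s), Set.mem_range_self _, ?_⟩
      have : dist (Sum.inl s : S ⊕ X) (Sum.inr (f s)) = crossDist f ρ s (f s) := rfl
      rw [this]
      have := crossDist_le f ρ s (f s) s
      simpa using this
    · rintro a ⟨x, rfl⟩
      refine ⟨Sum.inl (f.symm x), Set.mem_range_self _, ?_⟩
      have : dist (Sum.inl (f.symm x) : S ⊕ X) (Sum.inr x) = crossDist f ρ (f.symm x) x := rfl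
      rw [dist_comm, this]
      have h := crossDist_le f ρ (f.symm x) x (f.symm x)
      simpa using h
  -- conclude
  have hbdd : BddBelow G := ⟨ρ, hlow⟩
  have hle : sInf G ≤ ρ := le_trans (csInf_le hbdd hmem) hub
  have hge : ρ ≤ sInf G := le_csInf ⟨_, hmem⟩ hlow
  have : sInf G = ρ := le_antisymm hle hge
  rw [hgh, this, hρdef]
  ring
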